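/- For q odd and n even, S(n−1; n) = −π_q(n)·q^{(n−2)/2}, where S(β; n) = Σ_{P monic irreducible of degree n} Σ_{B monic of degree β} (B/P). -/

import Mathlib

open Polynomial
open scoped Classical

/-- The quadratic residue symbol `(B/P)` for `P` a monic irreducible polynomial:
`0` if `P ∣ B`, `1` if `B` is a nonzero square modulo `P`, and `-1` otherwise. -/
noncomputable def legendreSymbol {F : Type*} [Field F] (B P : F[X]) : ℤ :=
  if P ∣ B then 0 else if ∃ C : F[X], P ∣ (C ^ 2 - B) then 1 else -1

/-- The double character sum
`S(β; n) = Σ_{P monic irreducible, deg P = n} Σ_{B monic, deg B = β} (B/P)`. -/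
noncomputable def doubleCharSum (F : Type*) [Field F] (β n : ℕ) : ℤ :=
  ∑ᶠ P ∈ {P : F[X] | P.Monic ∧ Irreducible P ∧ P.natDegree = n},
    ∑ᶠ B ∈ {B : F[X] | B.Monic ∧ B.natDegree = β}, legendreSymbol B P

/-- `π_q(n)`, the number of monic irreducible polynomials of degree `n`. -/
noncomputable def primeCount (F : Type*) [Field F] (n : ℕ) : ℕ :=
  {P : F[X] | P.Monic ∧ Irreducible P ∧ P.natDegree = n}.ncard

namespace CharSumAux

set_option linter.unusedSectionVars false

variable {F : Type*} [Field F]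

/-- The polynomial with coefficients given by `a : Fin k → F`. -/
noncomputable def pkf (k : ℕ) (a : Fin k → F) : F[X] :=
  ∑ i : Fin k, C (a i) * X ^ (i : ℕ)

lemma pkf_coeff (k : ℕ) (a : Fin k → F) (j : ℕ) :
    (pkf k a).coeff j = if h : j < k then a ⟨j, h⟩ else 0 := by
  rw [pkf, finset_sum_coeff]
  split_ifs with h
  · rw [Finset.sum_eq_single (⟨j, h⟩ : Fin k)]
    · simp [coeff_C_mul, coeff_X_pow]
    · intro i _ hne
      simp only [coeff_C_mul, coeff_X_pow]
      rw [if_neg, mul_zero]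
      intro hji
      exact hne (Fin.ext hji.symm)
    · intro hmem; exact absurd (Finset.mem_univ _) hmem
  · apply Finset.sum_eq_zero
    intro i _
    simp only [coeff_C_mul, coeff_X_pow]
    rw [if_neg, mul_zero]
    intro hji
    exact h (hji ▸ i.isLt)

lemma pkf_coeff_zero (k : ℕ) (a : Fin k → F) (j : ℕ) (hj : k ≤ j) :
    (pkf k a).coeff j = 0 := by
  rw [pkf_coeff, dif_neg (by omega)]

lemma pkf_inj (k : ℕ) : Function.Injective (pkf k (F := F)) := by
  intro a a' h
  funext i
  have := congrArg (fun p => Polynomial.coeff p (i : ℕ)) h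
  simpa [pkf_coeff, i.isLt] using this

lemma pkf_add (k : ℕ) (a a' : Fin k → F) : pkf k (a + a') = pkf k a + pkf k a' := by
  ext j
  simp only [pkf_coeff, coeff_add]
  split_ifs with h
  · simp
  · simp

lemma pkf_smul (k : ℕ) (c : F) (a : Fin k → F) : pkf k (c • a) = c • pkf k a := by
  ext j
  simp only [pkf_coeff, coeff_smul]
  split_ifs with h
  · simp
  · simp

lemma pkf_zero (k : ℕ) : pkf k (0 : Fin k → F) = 0 := by
  ext j; simp only [pkf_coeff, coeff_zero]; split_ifs <;> simp

lemma pkf_exists (k : ℕ) (p : F[X]) (hp : ∀ j, k ≤ j → p.coeff j = 0) :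
    ∃ a : Fin k → F, pkf k a = p := by
  refine ⟨fun i => p.coeff (i : ℕ), ?_⟩
  ext j
  rw [pkf_coeff]
  split_ifs with h
  · rfl
  · exact (hp j (by omega)).symm

/-- Reduction of a multiple of `P` plus `f`. -/
lemma modByMonic_add_mul {P : F[X]} (hP : P.Monic) (f s : F[X]) :
    (f + P * s) %ₘ P = f %ₘ P := by
  have h := modByMonic_add_div f P
  exact (div_modByMonic_unique (s + f /ₘ P) (f %ₘ P) hP
    ⟨by linear_combination h, degree_modByMonic_lt f hP⟩).2

/-- Coefficient of a product vanishes above the "sum of degrees". -/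
lemma coeff_mul_zero {u v : F[X]} {s t : ℕ}
    (hu : ∀ i, s ≤ i → u.coeff i = 0) (hv : ∀ i, t ≤ i → v.coeff i = 0) :
    ∀ j, s + t - 1 ≤ j → (u * v).coeff j = 0 := by
  intro j hj
  rw [coeff_mul]
  apply Finset.sum_eq_zero
  rintro ⟨i₁, i₂⟩ hmem
  rw [Finset.HasAntidiagonal.mem_antidiagonal] at hmem
  rcases le_or_gt s i₁ with h1 | h1
  · rw [hu i₁ h1, zero_mul]
  · rw [hv i₂ (by omega), mul_zero]

section MainCount

variable [Fintype F]

/-- Parametrization of residues: `(a, b) ↦ pkf a + X^m * pkf b`. -/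
noncomputable def Phi (m : ℕ) (ab : (Fin m → F) × (Fin m → F)) : F[X] :=
  pkf m ab.1 + X ^ m * pkf m ab.2

lemma Phi_coeff_zero (m : ℕ) (ab : (Fin m → F) × (Fin m → F)) (j : ℕ) (hj : 2 * m ≤ j) :
    (Phi m ab).coeff j = 0 := by
  rw [Phi, coeff_add, pkf_coeff_zero _ _ _ (by omega), coeff_X_pow_mul',
    if_pos (by omega), pkf_coeff_zero _ _ _ (by omega), add_zero]

lemma Phi_inj (m : ℕ) : Function.Injective (Phi m (F := F)) := by
  rintro ⟨a, b⟩ ⟨a', b'⟩ h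
  have hcoeff : ∀ j, (Phi m (a, b)).coeff j = (Phi m (a', b')).coeff j :=
    fun j => congrArg (fun p => Polynomial.coeff p j) h
  have ha : a = a' := by
    funext i
    have := hcoeff (i : ℕ)
    simpa [Phi, coeff_add, pkf_coeff, i.isLt, coeff_X_pow_mul',
      if_neg (by omega : ¬ m ≤ (i : ℕ))] using this
  have hb : b = b' := by
    funext i
    have := hcoeff (m + (i : ℕ))
    simp only [Phi, coeff_add, pkf_coeff_zero _ _ _ (by omega : m ≤ m + (i : ℕ)),
      coeff_X_pow_mul', if_pos (by omega : m ≤ m + (i : ℕ)), zero_add] at this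
    rw [Nat.add_sub_cancel_left] at this
    simpa [pkf_coeff, i.isLt] using this
  rw [ha, hb]

/-- The finset of canonical residues mod a degree-`2m` polynomial. -/
noncomputable def Rfin (F : Type*) [Field F] [Fintype F] (m : ℕ) : Finset F[X] :=
  Finset.image (Phi m) Finset.univ

lemma mem_Rfin {m : ℕ} {r : F[X]} :
    r ∈ Rfin F m ↔ ∀ j, 2 * m ≤ j → r.coeff j = 0 := by
  constructor
  · rintro hr j hj
    obtain ⟨ab, _, rfl⟩ := Finset.mem_image.mp hr
    exact Phi_coeff_zero m ab j hj
  · intro h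
    refine Finset.mem_image.mpr
      ⟨(fun i => r.coeff (i : ℕ), fun i => r.coeff (m + (i : ℕ))), Finset.mem_univ _, ?_⟩
    ext j
    rw [Phi, coeff_add, pkf_coeff, coeff_X_pow_mul']
    rcases Nat.lt_or_ge j m with hj | hj
    · rw [dif_pos hj, if_neg (by omega), add_zero]
    · rw [dif_neg (by omega), if_pos hj, zero_add, pkf_coeff]
      rcases Nat.lt_or_ge (j - m) m with hj2 | hj2
      · rw [dif_pos hj2]
        show r.coeff (m + (j - m)) = r.coeff j
        congr 1
        omega
      · rw [dif_neg (by omega)]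
        exact (h j (by omega)).symm

end MainCount

section MainCount2

variable [Fintype F]

/-- The finset of monic polynomials of degree `k`. -/
noncomputable def Bfin (F : Type*) [Field F] [Fintype F] (k : ℕ) : Finset F[X] :=
  Finset.image (fun a : Fin k → F => X ^ k + pkf k a) Finset.univ

lemma mem_Bfin {k : ℕ} {p : F[X]} :
    p ∈ Bfin F k ↔ p.Monic ∧ p.natDegree = k := by
  constructor
  · rintro hp
    obtain ⟨a, _, rfl⟩ := Finset.mem_image.mp hp
    have hck : (X ^ k + pkf k a).coeff k = 1 := by
      rw [coeff_add, coeff_X_pow, if_pos rfl, pkf_coeff_zero _ _ _ le_rfl, add_zero]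
    have hdeg : (X ^ k + pkf k a).degree ≤ ((k : ℕ) : WithBot ℕ) := by
      rw [degree_le_iff_coeff_zero]
      intro j hj
      rw [Nat.cast_lt] at hj
      rw [coeff_add, coeff_X_pow, if_neg (by omega), pkf_coeff_zero _ _ _ (by omega), add_zero]
    have hnd : (X ^ k + pkf k a).natDegree = k :=
      le_antisymm (natDegree_le_iff_degree_le.mpr hdeg)
        (le_natDegree_of_ne_zero (hck ▸ one_ne_zero))
    exact ⟨by rw [Monic, leadingCoeff, hnd, hck], hnd⟩
  · rintro ⟨hmon, hdeg⟩
    refine Finset.mem_image.mpr ⟨fun i => p.coeff (i : ℕ), Finset.mem_univ _, ?_⟩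
    ext j
    rw [coeff_add, coeff_X_pow, pkf_coeff]
    rcases Nat.lt_or_ge j k with hj | hj
    · rw [if_neg (by omega), dif_pos hj, zero_add]
    · rcases Nat.eq_or_lt_of_le hj with hj2 | hj2
      · rw [if_pos hj2.symm, dif_neg (by omega), add_zero, ← hj2, ← hdeg]
        exact hmon.coeff_natDegree.symm
      · rw [if_neg (by omega), dif_neg (by omega), add_zero]
        exact (coeff_eq_zero_of_natDegree_lt (hdeg ▸ hj2)).symm

lemma card_Bfin (k : ℕ) : (Bfin F k).card = Fintype.card F ^ k := by
  rw [Bfin, Finset.card_image_of_injective _ ?hinj, Finset.card_univ, Fintype.card_fun,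
    Fintype.card_fin]
  case hinj =>
    intro a a' h
    exact pkf_inj k (by linear_combination h)

/-- Fibers of a nonzero linear functional on `Fin m → F` have `q^(m-1)` elements. -/
lemma fiber_count {m : ℕ} (hm : 1 ≤ m) (φ : (Fin m → F) → F)
    (hadd : ∀ x y, φ (x + y) = φ x + φ y)
    (hsmul : ∀ (c : F) x, φ (c • x) = c * φ x)
    (x₀ : Fin m → F) (hx₀ : φ x₀ ≠ 0) (t : F) :
    (Finset.univ.filter fun v => φ v = t).card = Fintype.card F ^ (m - 1) := by
  have hsub : ∀ x y, φ (x - y) = φ x - φ y := by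
    intro x y
    have : φ ((-1 : F) • y) = -φ y := by rw [hsmul]; ring
    rw [sub_eq_add_neg, hadd, show -y = (-1 : F) • y by simp, this, sub_eq_add_neg]
  have hconst : ∀ s : F, (Finset.univ.filter fun v => φ v = s).card
      = (Finset.univ.filter fun v => φ v = 0).card := by
    intro s
    apply Finset.card_bij (fun v _ => v - (s / φ x₀) • x₀)
    · intro v hv
      rw [Finset.mem_filter] at hv ⊢
      refine ⟨Finset.mem_univ _, ?_⟩
      rw [hsub, hsmul, hv.2, div_mul_cancel₀ _ hx₀, sub_self]
    · intro v _ v' _ h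
      exact sub_left_injective h
    · intro w hw
      rw [Finset.mem_filter] at hw
      refine ⟨w + (s / φ x₀) • x₀, Finset.mem_filter.mpr ⟨Finset.mem_univ _, ?_⟩,
        add_sub_cancel_right w _⟩
      rw [hadd, hsmul, hw.2, div_mul_cancel₀ _ hx₀, zero_add]
  have htotal : (Finset.univ : Finset (Fin m → F)).card
      = ∑ s : F, (Finset.univ.filter fun v => φ v = s).card :=
    Finset.card_eq_sum_card_fiberwise (fun x _ => Finset.mem_univ (φ x))
  rw [Finset.card_univ, Fintype.card_fun, Fintype.card_fin] at htotal
  have h2 : ∑ s : F, (Finset.univ.filter fun v => φ v = s).card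
      = Fintype.card F * (Finset.univ.filter fun v => φ v = 0).card := by
    rw [Finset.sum_congr rfl (fun s _ => hconst s), Finset.sum_const, Finset.card_univ,
      smul_eq_mul]
  have hq : Fintype.card F ^ m = Fintype.card F * Fintype.card F ^ (m - 1) := by
    rw [← pow_succ']
    congr 1
    omega
  have := htotal.trans h2
  rw [hconst t]
  rw [hq] at this
  exact Nat.eq_of_mul_eq_mul_left Fintype.card_pos this.symm

end MainCount2

section WithP

variable {P : F[X]} {m : ℕ}

/-- Extracting top coefficients: if `ℓ(X^i * g) = 0` for `i < m` then the top `m`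
coefficients of `g` vanish. -/
lemma lemA (hP : P.Monic) (hdegP : P.degree = ((2 * m : ℕ) : WithBot ℕ)) (hm : 1 ≤ m)
    (g : F[X]) (hg : ∀ j, 2 * m ≤ j → g.coeff j = 0)
    (h : ∀ i, i < m → ((X ^ i * g) %ₘ P).coeff (2 * m - 1) = 0) :
    ∀ j, m ≤ j → g.coeff j = 0 := by
  suffices H : ∀ i, i ≤ m → ∀ j, 2 * m - i ≤ j → g.coeff j = 0 by
    intro j hj
    exact H m le_rfl j (by omega)
  intro i
  induction i with
  | zero => exact fun _ j hj => hg j (by omega)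
  | succ i ih =>
    intro hi j hj
    have ihg : ∀ j, 2 * m - i ≤ j → g.coeff j = 0 := ih (by omega)
    rcases Nat.lt_or_ge j (2 * m - i) with hj2 | hj2
    · have hj3 : j = 2 * m - 1 - i := by omega
      have hmod : (X ^ i * g) %ₘ P = X ^ i * g := by
        rw [modByMonic_eq_self_iff hP, hdegP]
        refine (degree_lt_iff_coeff_zero _ _).mpr ?_
        intro j' hj'
        rw [coeff_X_pow_mul']
        split_ifs with hle
        · exact ihg _ (by omega)
        · rfl
      have hkey := h i (by omega)
      rw [hmod, coeff_X_pow_mul', if_pos (by omega : i ≤ 2 * m - 1)] at hkey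
      rw [hj3]
      exact hkey
    · exact ihg j hj2

/-- Nondegeneracy: a nonzero `w` of degree `< m` pairs nontrivially with some `X^(m+i)`. -/
lemma lemB (hP : P.Monic) (hdegP : P.degree = ((2 * m : ℕ) : WithBot ℕ)) (hm : 1 ≤ m)
    (w : F[X]) (hw : w ≠ 0) (hdw : ∀ j, m ≤ j → w.coeff j = 0)
    (h : ∀ i, i < m → ((X ^ (m + i) * w) %ₘ P).coeff (2 * m - 1) = 0) : False := by
  set g := (X ^ m * w) %ₘ P with hgdef
  have hgd : g.degree < P.degree := degree_modByMonic_lt _ hP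
  have hg0 : ∀ j, 2 * m ≤ j → g.coeff j = 0 := by
    intro j hj
    refine coeff_eq_zero_of_degree_lt (lt_of_lt_of_le hgd ?_)
    rw [hdegP]
    exact_mod_cast hj
  have key : ∀ i, i < m → ((X ^ i * g) %ₘ P).coeff (2 * m - 1) = 0 := by
    intro i hi
    have hrepr : X ^ i * g = X ^ (m + i) * w + P * (-(X ^ i * (X ^ m * w /ₘ P))) := by
      rw [hgdef, modByMonic_eq_sub_mul_div _ P]
      ring
    rw [hrepr, modByMonic_add_mul hP]
    exact h i hi
  have hgtop := lemA hP hdegP hm g hg0 key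
  have hdvd : P ∣ X ^ m * w - g := by
    refine ⟨X ^ m * w /ₘ P, ?_⟩
    rw [hgdef, modByMonic_eq_sub_mul_div _ P]
    ring
  have hne : X ^ m * w - g ≠ 0 := by
    intro h0
    have hc : (X ^ m * w - g).coeff (m + w.natDegree) = w.leadingCoeff := by
      rw [coeff_sub, coeff_X_pow_mul', if_pos (by omega), Nat.add_sub_cancel_left,
        hgtop _ (by omega), sub_zero, leadingCoeff]
    rw [h0, coeff_zero] at hc
    exact hw (leadingCoeff_eq_zero.mp hc.symm)
  have hd : (X ^ m * w - g).degree < P.degree := by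
    refine lt_of_le_of_lt (degree_sub_le _ _) (max_lt ?_ hgd)
    rw [hdegP]
    refine (degree_lt_iff_coeff_zero _ _).mpr ?_
    intro j hj
    rw [coeff_X_pow_mul']
    split_ifs with hle
    · exact hdw _ (by omega)
    · rfl
  exact hne (eq_zero_of_dvd_of_degree_lt hdvd hd)

variable [Fintype F]

/-- For a residue `s` of degree `< 2m`, being monic of degree `2m-1` is the same as having
top coefficient `1`. -/
lemma monic_iff_top (hm : 1 ≤ m) {s : F[X]} (hs : s.degree < ((2 * m : ℕ) : WithBot ℕ)) :
    (s.Monic ∧ s.natDegree = 2 * m - 1) ↔ s.coeff (2 * m - 1) = 1 := by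
  constructor
  · rintro ⟨hmon, hdeg⟩
    rw [← hdeg]
    exact hmon.coeff_natDegree
  · intro hc
    have hnd : s.natDegree = 2 * m - 1 := by
      refine le_antisymm ?_ (le_natDegree_of_ne_zero (hc ▸ one_ne_zero))
      rw [natDegree_le_iff_coeff_eq_zero]
      intro N hN
      exact coeff_eq_zero_of_degree_lt
        (lt_of_lt_of_le hs (by exact_mod_cast (by omega : 2 * m ≤ N)))
    exact ⟨by rw [Monic, leadingCoeff, hnd, hc], hnd⟩

/-- The Legendre symbol as a count of square roots among canonical residues. -/
lemma legendre_eq_cnt (h2 : (2 : F) ≠ 0) (hP : P.Monic) (hirr : Irreducible P) (hm : 1 ≤ m)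
    (hdegP : P.degree = ((2 * m : ℕ) : WithBot ℕ)) (B : F[X]) :
    legendreSymbol B P =
      (((Rfin F m).filter fun r => P ∣ r ^ 2 - B).card : ℤ) - 1 := by
  have hprime : Prime P := irreducible_iff_prime.mp hirr
  have hmemR : ∀ r : F[X], r.degree < P.degree → r ∈ Rfin F m := by
    intro r hr
    rw [hdegP] at hr
    exact mem_Rfin.mpr fun j hj =>
      coeff_eq_zero_of_degree_lt (lt_of_lt_of_le hr (by exact_mod_cast hj))
  have hdegR : ∀ r : F[X], r ∈ Rfin F m → r.degree < P.degree := by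
    intro r hr
    rw [hdegP]
    exact (degree_lt_iff_coeff_zero _ _).mpr (mem_Rfin.mp hr)
  by_cases hd : P ∣ B
  · rw [legendreSymbol, if_pos hd]
    have hset : (Rfin F m).filter (fun r => P ∣ r ^ 2 - B) = {0} := by
      apply Finset.eq_singleton_iff_unique_mem.mpr
      constructor
      · refine Finset.mem_filter.mpr ⟨mem_Rfin.mpr fun j _ => coeff_zero j, ?_⟩
        simpa using hd.neg_right
      · rintro r hr
        rw [Finset.mem_filter] at hr
        have h1 : P ∣ r ^ 2 := by
          have := dvd_add hr.2 hd
          simpa using this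
        have h3 : P ∣ r := hprime.dvd_of_dvd_pow h1
        by_contra h0
        exact absurd (degree_le_of_dvd h3 h0) (not_le.mpr (hdegR r hr.1))
    rw [hset]
    simp
  · by_cases hsq : ∃ C : F[X], P ∣ C ^ 2 - B
    · rw [legendreSymbol, if_neg hd, if_pos hsq]
      obtain ⟨Cw, hCw⟩ := hsq
      set r₀ := Cw %ₘ P with hr₀def
      have hr₀C : P ∣ r₀ - Cw := by
        refine ⟨-(Cw /ₘ P), ?_⟩
        rw [hr₀def, modByMonic_eq_sub_mul_div _ P]
        ring
      have hr₀ : P ∣ r₀ ^ 2 - B := by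
        have : r₀ ^ 2 - B = (Cw ^ 2 - B) + (r₀ - Cw) * (r₀ + Cw) := by ring
        rw [this]
        exact dvd_add hCw (hr₀C.mul_right _)
      have hr₀R : r₀ ∈ Rfin F m := hmemR r₀ (degree_modByMonic_lt _ hP)
      have hr₀0 : r₀ ≠ 0 := by
        intro h0
        rw [h0, show (0 : F[X]) ^ 2 - B = -B by ring] at hr₀
        exact hd (dvd_neg.mp hr₀)
      have hset : (Rfin F m).filter (fun r => P ∣ r ^ 2 - B) = {r₀, -r₀} := by
        ext r
        rw [Finset.mem_filter, Finset.mem_insert, Finset.mem_singleton]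
        constructor
        · rintro ⟨hrR, hrd⟩
          have h1 : P ∣ (r - r₀) * (r + r₀) := by
            have : (r - r₀) * (r + r₀) = (r ^ 2 - B) - (r₀ ^ 2 - B) := by ring
            rw [this]
            exact dvd_sub hrd hr₀
          have hdd : ∀ d : F[X], d.degree < P.degree → P ∣ d → d = 0 :=
            fun d h1 h2 => eq_zero_of_dvd_of_degree_lt h2 h1
          rcases hprime.2.2 _ _ h1 with h | h
          · left
            have := hdd _ (lt_of_le_of_lt (degree_sub_le _ _)
              (max_lt (hdegR r hrR) (hdegR r₀ hr₀R))) h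
            linear_combination this
          · right
            have := hdd _ (lt_of_le_of_lt (degree_add_le _ _)
              (max_lt (hdegR r hrR) (hdegR r₀ hr₀R))) h
            linear_combination this
        · rintro (rfl | rfl)
          · exact ⟨hr₀R, hr₀⟩
          · refine ⟨hmemR _ ?_, by rw [neg_pow]; simpa using hr₀⟩
            rw [degree_neg]
            exact hdegR r₀ hr₀R
      rw [hset, Finset.card_pair]
      · norm_num
      · intro heq
        apply hr₀0
        have h2' : (2 : F[X]) ≠ 0 := by
          intro hh
          apply h2
          have := congrArg (fun p => Polynomial.coeff p 0) hh
          simpa using this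
        have : (2 : F[X]) * r₀ = 0 := by linear_combination heq
        rcases mul_eq_zero.mp this with h | h
        · exact absurd h h2'
        · exact h
    · rw [legendreSymbol, if_neg hd, if_neg hsq]
      have hset : (Rfin F m).filter (fun r => P ∣ r ^ 2 - B) = ∅ := by
        rw [Finset.filter_eq_empty_iff]
        intro r _ hrd
        exact hsq ⟨r, hrd⟩
      rw [hset]
      simp

/-- Counting monic `B` of degree `2m-1` congruent to a given residue. -/
lemma point2 (hP : P.Monic) (hm : 1 ≤ m)
    (hdegP : P.degree = ((2 * m : ℕ) : WithBot ℕ)) (r : F[X]) :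
    ((Bfin F (2 * m - 1)).filter fun B => P ∣ r ^ 2 - B).card
      = if ((r ^ 2) %ₘ P).coeff (2 * m - 1) = 1 then 1 else 0 := by
  set s := (r ^ 2) %ₘ P with hsdef
  have hsd : s.degree < P.degree := degree_modByMonic_lt _ hP
  have hsd' : s.degree < ((2 * m : ℕ) : WithBot ℕ) := hdegP ▸ hsd
  have hdvds : P ∣ r ^ 2 - s := by
    refine ⟨r ^ 2 /ₘ P, ?_⟩
    rw [hsdef, modByMonic_eq_sub_mul_div _ P]
    ring
  have key : ∀ B ∈ Bfin F (2 * m - 1), (P ∣ r ^ 2 - B ↔ B = s) := by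
    intro B hB
    obtain ⟨hmon, hdeg⟩ := mem_Bfin.mp hB
    have hBd : B.degree < P.degree := by
      rw [degree_eq_natDegree hmon.ne_zero, hdeg, hdegP]
      exact_mod_cast (by omega : 2 * m - 1 < 2 * m)
    constructor
    · intro hdvd
      have hdvd2 : P ∣ s - B := by
        have h1 : s - B = (r ^ 2 - B) - (r ^ 2 - s) := by ring
        rw [h1]
        exact dvd_sub hdvd hdvds
      have h0 : s - B = 0 := eq_zero_of_dvd_of_degree_lt hdvd2
        (lt_of_le_of_lt (degree_sub_le _ _) (max_lt hsd hBd))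
      linear_combination -h0
    · rintro rfl
      exact hdvds
  split_ifs with hc
  · have hsB : s ∈ Bfin F (2 * m - 1) := mem_Bfin.mpr ((monic_iff_top hm hsd').mpr hc)
    have hset : (Bfin F (2 * m - 1)).filter (fun B => P ∣ r ^ 2 - B) = {s} := by
      ext B
      rw [Finset.mem_filter, Finset.mem_singleton]
      constructor
      · rintro ⟨hB, hdvd⟩
        exact (key B hB).mp hdvd
      · rintro rfl
        exact ⟨hsB, hdvds⟩
    rw [hset, Finset.card_singleton]
  · have hset : (Bfin F (2 * m - 1)).filter (fun B => P ∣ r ^ 2 - B) = ∅ := by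
      rw [Finset.filter_eq_empty_iff]
      intro B hB hdvd
      have hBs := (key B hB).mp hdvd
      subst hBs
      exact hc ((monic_iff_top hm hsd').mp (mem_Bfin.mp hB))
    rw [hset, Finset.card_empty]

/-- Expansion of the top coefficient of a squared residue. -/
lemma ell_sq (hP : P.Monic) (hm : 1 ≤ m)
    (hdegP : P.degree = ((2 * m : ℕ) : WithBot ℕ)) (a b : Fin m → F) :
    (((Phi m (a, b)) ^ 2) %ₘ P).coeff (2 * m - 1)
      = 2 * ((X ^ m * pkf m a * pkf m b) %ₘ P).coeff (2 * m - 1)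
        + ((X ^ (2 * m) * pkf m b ^ 2) %ₘ P).coeff (2 * m - 1) := by
  have expand : (Phi m (a, b)) ^ 2
      = pkf m a * pkf m a + ((X ^ m * pkf m a * pkf m b + X ^ m * pkf m a * pkf m b)
          + X ^ (2 * m) * pkf m b ^ 2) := by
    rw [Phi]
    ring
  rw [expand, add_modByMonic, add_modByMonic, add_modByMonic, coeff_add, coeff_add, coeff_add]
  have h1 : (pkf m a * pkf m a) %ₘ P = pkf m a * pkf m a := by
    rw [modByMonic_eq_self_iff hP, hdegP]
    refine (degree_lt_iff_coeff_zero _ _).mpr ?_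
    intro j hj
    exact coeff_mul_zero (pkf_coeff_zero m a) (pkf_coeff_zero m a) j (by omega)
  rw [h1, coeff_mul_zero (pkf_coeff_zero m a) (pkf_coeff_zero m a) (2 * m - 1) (by omega)]
  ring

/-- The main count: residues whose square has top coefficient `1`. -/
lemma N_count (h2 : (2 : F) ≠ 0) (hP : P.Monic) (hm : 1 ≤ m)
    (hdegP : P.degree = ((2 * m : ℕ) : WithBot ℕ)) :
    ((Rfin F m).filter fun r => ((r ^ 2) %ₘ P).coeff (2 * m - 1) = 1).card
      = (Fintype.card F ^ m - 1) * Fintype.card F ^ (m - 1) := by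
  rw [Rfin, Finset.filter_image, Finset.card_image_of_injective _ (Phi_inj m),
    Finset.card_filter, ← Finset.univ_product_univ, Finset.sum_product_right]
  have per_b : ∀ b : Fin m → F,
      (∑ a : Fin m → F, if (((Phi m (a, b)) ^ 2 %ₘ P).coeff (2 * m - 1) = 1)
          then (1 : ℕ) else 0)
        = if b = 0 then 0 else Fintype.card F ^ (m - 1) := by
    intro b
    have hsc : ∀ a : Fin m → F, ((((Phi m (a, b)) ^ 2) %ₘ P).coeff (2 * m - 1) = 1)
        ↔ (2 * ((X ^ m * pkf m a * pkf m b) %ₘ P).coeff (2 * m - 1)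
            + ((X ^ (2 * m) * pkf m b ^ 2) %ₘ P).coeff (2 * m - 1) = 1) := by
      intro a
      rw [ell_sq hP hm hdegP a b]
    by_cases hb : b = 0
    · subst hb
      rw [if_pos rfl]
      apply Finset.sum_eq_zero
      intro a _
      rw [if_neg]
      rw [hsc a, pkf_zero]
      simp [zero_modByMonic]
    · rw [if_neg hb]
      have hadd : ∀ x y : Fin m → F,
          (fun a => 2 * ((X ^ m * pkf m a * pkf m b) %ₘ P).coeff (2 * m - 1)) (x + y)
            = (fun a => 2 * ((X ^ m * pkf m a * pkf m b) %ₘ P).coeff (2 * m - 1)) x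
              + (fun a => 2 * ((X ^ m * pkf m a * pkf m b) %ₘ P).coeff (2 * m - 1)) y := by
        intro x y
        simp only
        rw [pkf_add, show X ^ m * (pkf m x + pkf m y) * pkf m b
          = X ^ m * pkf m x * pkf m b + X ^ m * pkf m y * pkf m b by ring,
          add_modByMonic, coeff_add]
        ring
      have hsmul : ∀ (c : F) (x : Fin m → F),
          (fun a => 2 * ((X ^ m * pkf m a * pkf m b) %ₘ P).coeff (2 * m - 1)) (c • x)
            = c * (fun a => 2 * ((X ^ m * pkf m a * pkf m b) %ₘ P).coeff (2 * m - 1)) x := by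
        intro c x
        simp only
        rw [pkf_smul, show X ^ m * (c • pkf m x) * pkf m b
          = c • (X ^ m * pkf m x * pkf m b) by
            rw [smul_eq_C_mul, smul_eq_C_mul]; ring,
          smul_modByMonic, coeff_smul, smul_eq_mul]
        ring
      have hwne : pkf m b ≠ 0 := by
        intro h0
        exact hb (pkf_inj m (h0.trans (pkf_zero m).symm))
      have hex : ∃ x₀ : Fin m → F,
          (fun a => 2 * ((X ^ m * pkf m a * pkf m b) %ₘ P).coeff (2 * m - 1)) x₀ ≠ 0 := by
        by_contra hno
        push_neg at hno
        refine lemB hP hdegP hm (pkf m b) hwne (pkf_coeff_zero m b) ?_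
        intro i hi
        obtain ⟨a, ha⟩ := pkf_exists m (X ^ i : F[X])
          (fun j hj => by rw [coeff_X_pow, if_neg (by omega)])
        have hv0 := hno a
        have hv : ((X ^ m * pkf m a * pkf m b) %ₘ P).coeff (2 * m - 1) = 0 := by
          rcases mul_eq_zero.mp hv0 with h | h
          · exact absurd h h2
          · exact h
        rw [ha] at hv
        rw [show X ^ (m + i) * pkf m b = X ^ m * X ^ i * pkf m b by rw [pow_add]]
        exact hv
      obtain ⟨x₀, hx₀⟩ := hex
      have hcount := fiber_count hm
        (fun a => 2 * ((X ^ m * pkf m a * pkf m b) %ₘ P).coeff (2 * m - 1))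
        hadd hsmul x₀ hx₀
        (1 - ((X ^ (2 * m) * pkf m b ^ 2) %ₘ P).coeff (2 * m - 1))
      rw [← hcount, Finset.card_filter]
      apply Finset.sum_congr rfl
      intro a _
      refine if_congr ?_ rfl rfl
      rw [hsc a, eq_sub_iff_add_eq]
  rw [Finset.sum_congr rfl (fun b _ => per_b b)]
  have hrw : ∀ b : Fin m → F, (if b = 0 then (0 : ℕ) else Fintype.card F ^ (m - 1))
      = if b ≠ 0 then Fintype.card F ^ (m - 1) else 0 := by
    intro b
    by_cases hb : b = 0 <;> simp [hb]
  rw [Finset.sum_congr rfl (fun b _ => hrw b), ← Finset.sum_filter, Finset.filter_ne',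
    Finset.sum_const, Finset.card_erase_of_mem (Finset.mem_univ _), Finset.card_univ,
    Fintype.card_fun, Fintype.card_fin, smul_eq_mul]

/-- The inner sum over monic `B` of degree `2m - 1`. -/
lemma inner_sum (h2 : (2 : F) ≠ 0) (hP : P.Monic) (hirr : Irreducible P) (hm : 1 ≤ m)
    (hdeg : P.natDegree = 2 * m) :
    ∑ B ∈ Bfin F (2 * m - 1), legendreSymbol B P
      = -((Fintype.card F : ℤ) ^ (m - 1)) := by
  have hdegP : P.degree = ((2 * m : ℕ) : WithBot ℕ) := by
    rw [degree_eq_natDegree hP.ne_zero, hdeg]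
  rw [Finset.sum_congr rfl fun B _ => legendre_eq_cnt h2 hP hirr hm hdegP B,
    Finset.sum_sub_distrib, Finset.sum_const, card_Bfin]
  have hswapN : ∑ B ∈ Bfin F (2 * m - 1), ((Rfin F m).filter fun r => P ∣ r ^ 2 - B).card
      = ((Rfin F m).filter fun r => ((r ^ 2) %ₘ P).coeff (2 * m - 1) = 1).card := by
    simp only [Finset.card_filter]
    rw [Finset.sum_comm]
    exact Finset.sum_congr rfl fun r _ => by
      rw [← Finset.card_filter, point2 hP hm hdegP r]
  have hcast : ∑ B ∈ Bfin F (2 * m - 1),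
      ((((Rfin F m).filter fun r => P ∣ r ^ 2 - B).card : ℤ))
      = ((((Rfin F m).filter fun r => ((r ^ 2) %ₘ P).coeff (2 * m - 1) = 1).card : ℕ) : ℤ) := by
    rw [← Nat.cast_sum, hswapN]
  rw [hcast, N_count h2 hP hm hdegP]
  have hq1 : 1 ≤ Fintype.card F ^ m := Nat.one_le_pow _ _ Fintype.card_pos
  have hexp : (Fintype.card F : ℤ) ^ (2 * m - 1)
      = (Fintype.card F : ℤ) ^ m * (Fintype.card F : ℤ) ^ (m - 1) := by
    rw [← pow_add]
    congr 1
    omega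
  rw [nsmul_eq_mul, mul_one]
  push_cast [Nat.cast_sub hq1]
  rw [hexp]
  ring

end WithP

end CharSumAux

/-- For `q` odd and `n` even, `S(n-1; n) = -π_q(n) q^{(n-2)/2}`. -/
theorem doubleCharSum_top_even (F : Type*) [Field F] [Fintype F]
    (hq : Odd (Fintype.card F)) (n : ℕ) (heven : Even n) :
    doubleCharSum F (n - 1) n =
      -((primeCount F n : ℤ) * (Fintype.card F : ℤ) ^ ((n - 2) / 2)) := by
  classical
  have h2 : (2 : F) ≠ 0 := by
    refine Ring.two_ne_zero ?_
    intro hcr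
    have := FiniteField.even_card_of_char_two hcr
    rcases hq with ⟨k, hk⟩
    omega
  set Sfin : Finset F[X] := (CharSumAux.Bfin F n).filter (fun p => Irreducible p) with hSdef
  have hSset : {P : F[X] | P.Monic ∧ Irreducible P ∧ P.natDegree = n} = ↑Sfin := by
    ext p
    simp only [Set.mem_setOf_eq, hSdef, Finset.coe_filter, CharSumAux.mem_Bfin]
    tauto
  have hBset : {B : F[X] | B.Monic ∧ B.natDegree = (n - 1)} = ↑(CharSumAux.Bfin F (n - 1)) := by
    ext p
    simp [CharSumAux.mem_Bfin]
  rw [doubleCharSum, hSset, finsum_mem_coe_finset]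
  have hinner : ∀ p ∈ Sfin,
      (∑ᶠ B ∈ {B : F[X] | B.Monic ∧ B.natDegree = (n - 1)}, legendreSymbol B p)
        = -((Fintype.card F : ℤ) ^ ((n - 2) / 2)) := by
    intro p hp
    rw [hBset, finsum_mem_coe_finset]
    rw [hSdef, Finset.mem_filter, CharSumAux.mem_Bfin] at hp
    obtain ⟨⟨hmon, hdeg⟩, hirr⟩ := hp
    have hn1 : 1 ≤ n := hdeg ▸ hirr.natDegree_pos
    obtain ⟨k, hk⟩ := heven
    have hm : 1 ≤ k := by omega
    have hdeg2 : p.natDegree = 2 * k := by omega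
    have hval := CharSumAux.inner_sum h2 hmon hirr hm hdeg2
    rw [show n - 1 = 2 * k - 1 by omega, show (n - 2) / 2 = k - 1 by omega]
    exact hval
  rw [Finset.sum_congr rfl hinner, Finset.sum_const]
  rw [primeCount, hSset, Set.ncard_coe_finset, nsmul_eq_mul]
  ring
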